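/- Let A be the 3-dimensional commutative associative ℂ-algebra with basis e, u, v, unit e, and products u² = −a₃c₃·e + a₂u + a₃v, u·v = a₃c₂·e, v² = −a₂c₂·e + c₂u + c₃v. Set R₁ = a₃c₃ − a₂²/3, R₂ = a₂c₂ − c₃²/3, R₃ = a₃c₂ − a₂c₃/9. If R₁ = R₂ = R₃ = 0 and a₃ ≠ 0, then A is isomorphic to ℂ[x]/(x³). -/

import Mathlib

open Polynomial in
/-- `Q² = ℂ[x]/(x³)`. -/
noncomputable def Qtwo : Type := Polynomial ℂ ⧸ Ideal.span {(X : Polynomial ℂ) ^ 3}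

noncomputable instance : CommRing Qtwo := Ideal.Quotient.commRing _
noncomputable instance : Algebra ℂ Qtwo := Ideal.Quotient.algebra ℂ

open Polynomial

/-- Let `A` be the 3-dimensional commutative associative unital ℂ-algebra with basis
`1, u, v` and products `u² = −a₃c₃·1 + a₂u + a₃v`, `u·v = a₃c₂·1`,
`v² = −a₂c₂·1 + c₂u + c₃v`. Set `R₁ = a₃c₃ − a₂²/3`, `R₂ = a₂c₂ − c₃²/3`,
`R₃ = a₃c₂ − a₂c₃/9`. If `R₁ = R₂ = R₃ = 0` and `a₃ ≠ 0`, then `A` is isomorphic to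
`ℂ[x]/(x³)`. -/
theorem iso_Qtwo_of_R_vanishing
    (A : Type) [CommRing A] [Algebra ℂ A]
    (u v : A) (a₂ a₃ c₂ c₃ : ℂ)
    (hdim : Module.finrank ℂ A = 3)
    (hspan : Submodule.span ℂ {(1 : A), u, v} = ⊤)
    (huu : u * u = (-(a₃ * c₃)) • (1 : A) + a₂ • u + a₃ • v)
    (huv : u * v = (a₃ * c₂) • (1 : A))
    (hvv : v * v = (-(a₂ * c₂)) • (1 : A) + c₂ • u + c₃ • v)
    (hR₁ : a₃ * c₃ - a₂ ^ 2 / 3 = 0)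
    (hR₂ : a₂ * c₂ - c₃ ^ 2 / 3 = 0)
    (hR₃ : a₃ * c₂ - a₂ * c₃ / 9 = 0)
    (ha₃ : a₃ ≠ 0) :
    Nonempty (A ≃ₐ[ℂ] Qtwo) := by
  classical
  set s : ℂ := a₂ / (3 * a₃) with hs
  have ha2 : a₂ = 3 * a₃ * s := by rw [hs]; field_simp
  have hc3 : c₃ = 3 * a₃ * s ^ 2 := by
    have key : a₃ * (3 * a₃ * s ^ 2) = a₂ ^ 2 / 3 := by
      rw [hs]; field_simp
    refine mul_left_cancel₀ ha₃ ?_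
    rw [key]; linear_combination hR₁
  have hc2 : c₂ = a₃ * s ^ 3 := by
    have key : a₃ * (a₃ * s ^ 3) = a₂ * c₃ / 9 := by
      rw [hc3, hs]; field_simp; ring
    refine mul_left_cancel₀ ha₃ ?_
    rw [key]; linear_combination hR₃
  simp only [ha2, hc3, hc2] at huu huv hvv
  simp only [Algebra.smul_def, map_mul, map_neg, map_ofNat, map_pow, mul_one] at huu huv hvv
  set P : A := algebraMap ℂ A a₃ with hP
  set Q : A := algebraMap ℂ A s with hQ
  set w : A := u - P * Q with hw
  have hw3 : w ^ 3 = 0 := by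
    rw [hw]; linear_combination u * huu + P * huv
  -- the algebra hom from the polynomial ring
  have hI : ∀ p ∈ Ideal.span {(X : Polynomial ℂ) ^ 3}, (aeval w) p = 0 := by
    intro p hp
    rw [Ideal.mem_span_singleton] at hp
    obtain ⟨q, rfl⟩ := hp
    simp [hw3]
  have hinv : algebraMap ℂ A a₃⁻¹ * P = 1 := by
    rw [hP, ← map_mul, inv_mul_cancel₀ ha₃, map_one]
  let ψ : Qtwo →ₐ[ℂ] A := Ideal.Quotient.liftₐ _ (aeval w) hI
  have hψ : ∀ p : Polynomial ℂ, ψ (Ideal.Quotient.mk _ p) = aeval w p := by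
    intro p
    exact Ideal.Quotient.liftₐ_apply _ _ _ _
  have hsurj : Function.Surjective ψ := by
    have h1mem : (1 : A) ∈ Subalgebra.toSubmodule ψ.range := ⟨1, map_one ψ⟩
    have humem : u ∈ Subalgebra.toSubmodule ψ.range := by
      refine ⟨Ideal.Quotient.mk _ (X + C (a₃ * s)), ?_⟩
      show ψ _ = _
      rw [hψ]
      simp only [map_add, aeval_X, aeval_C]
      rw [hw, hP, hQ, map_mul]
      ring
    have hvmem : v ∈ Subalgebra.toSubmodule ψ.range := by
      refine ⟨Ideal.Quotient.mk _ (C a₃⁻¹ * (X ^ 2 - C (a₃ * s) * X + C (a₃ ^ 2 * s ^ 2))), ?_⟩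
      show ψ _ = _
      rw [hψ]
      simp only [map_mul, map_add, map_sub, map_pow, aeval_X, aeval_C, map_ofNat]
      rw [hw]
      linear_combination algebraMap ℂ A a₃⁻¹ * huu + v * hinv
    have hle : (⊤ : Submodule ℂ A) ≤ Subalgebra.toSubmodule ψ.range := by
      rw [← hspan]
      apply Submodule.span_le.mpr
      rintro x (rfl | rfl | rfl) <;> assumption
    intro a
    exact hle (Submodule.mem_top) |>.imp (fun p hp => hp) |>.elim fun p hp => ⟨p, hp⟩
  have hAfin : FiniteDimensional ℂ A :=
    Module.Finite.of_fg_top (Submodule.fg_def.mpr ⟨{1, u, v},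
      (Set.finite_singleton v).insert u |>.insert 1, hspan⟩)
  have hQfin : @FiniteDimensional ℂ Qtwo _ _ Algebra.toModule :=
    (AdjoinRoot.powerBasis (f := (X : Polynomial ℂ) ^ 3) (pow_ne_zero _ X_ne_zero)).finite
  have hQdim : Module.finrank ℂ Qtwo = 3 := by
    refine (?_ : Module.finrank ℂ (AdjoinRoot ((X : Polynomial ℂ) ^ 3)) = 3)
    rw [(AdjoinRoot.powerBasis (f := (X : Polynomial ℂ) ^ 3) (pow_ne_zero _ X_ne_zero)).finrank]
    simp [AdjoinRoot.powerBasis]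
  have hinj : Function.Injective ψ :=
    (@LinearMap.injective_iff_surjective_of_finrank_eq_finrank ℂ Qtwo _ _ Algebra.toModule A _ _
      hQfin _ (hQdim.trans hdim.symm) ψ.toLinearMap).mpr hsurj
  exact ⟨(AlgEquiv.ofBijective ψ ⟨hinj, hsurj⟩).symm⟩
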